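/- Let K ⊂ ℝᵈ be a convex body, θ ∈ S^{d−1}, and t ∈ [m_{K,θ}, h_K(θ)]. Then A_{K,θ}(t) ≥ (1/2)·((h_K(θ) − t)/(h_K(θ) − m_{K,θ}))^d. -/

import Mathlib

open MeasureTheory Set intervalIntegral
open scoped RealInnerProductSpace ENNReal

noncomputable section

/-- Euclidean space `ℝᵈ`. -/
abbrev Euc (d : ℕ) := EuclideanSpace ℝ (Fin d)

/-- A convex body: a compact convex set with nonempty interior. -/
def IsConvexBody {d : ℕ} (K : Set (Euc d)) : Prop :=
  IsCompact K ∧ Convex ℝ K ∧ (interior K).Nonempty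

/-- The support function `h_K(θ) = sup_{x ∈ K} ⟨θ, x⟩`. -/
def suppFn {d : ℕ} (K : Set (Euc d)) (θ : Euc d) : ℝ :=
  sSup ((fun x => ⟪θ, x⟫) '' K)

/-- The normalized parallel section function
`ψ_{K,θ}(t) = vol_{d-1}(K ∩ {y : ⟨θ,y⟩ = t}) / vol_d(K)`, where the `(d-1)`-dimensional
volume is Hausdorff measure. -/
def psi {d : ℕ} (K : Set (Euc d)) (θ : Euc d) (t : ℝ) : ℝ :=
  (μH[(d : ℝ) - 1] (K ∩ {y : Euc d | ⟪θ, y⟫ = t})).toReal / (volume K).toReal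

/-- `A_{K,θ}(t) = ∫_t^{h_K(θ)} ψ_{K,θ}(s) ds`. -/
def sectionTail {d : ℕ} (K : Set (Euc d)) (θ : Euc d) (t : ℝ) : ℝ :=
  ∫ s in t..(suppFn K θ), psi K θ s

namespace SectionTailAux

variable {n : ℕ}

def Smap (b : OrthonormalBasis (Fin (n+1)) ℝ (Euc (n+1))) : Euc (n+1) ≃ᵐ ℝ × Euc n :=
  (b.measurableEquiv.trans (MeasurableEquiv.toLp 2 (Fin (n+1) → ℝ)).symm).trans
    ((MeasurableEquiv.piFinSuccAbove (fun _ : Fin (n+1) => ℝ) 0).trans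
      ((MeasurableEquiv.refl ℝ).prodCongr (MeasurableEquiv.toLp 2 (Fin n → ℝ)).symm.symm))

lemma Smap_mp (b : OrthonormalBasis (Fin (n+1)) ℝ (Euc (n+1))) :
    MeasurePreserving (Smap b) volume (volume.prod volume) := by
  have m1 := b.measurePreserving_measurableEquiv
  have m2 := EuclideanSpace.volume_preserving_symm_measurableEquiv_toLp (Fin (n+1))
  have m3 : MeasurePreserving (MeasurableEquiv.piFinSuccAbove (fun _ : Fin (n+1) => ℝ) 0)
      volume ((volume : Measure ℝ).prod (volume : Measure (Fin n → ℝ))) := by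
    have := measurePreserving_piFinSuccAbove (fun _ : Fin (n+1) => (volume : Measure ℝ)) 0
    simpa [← volume_pi] using this
  have m4 : MeasurePreserving
      ((MeasurableEquiv.refl ℝ).prodCongr (MeasurableEquiv.toLp 2 (Fin n → ℝ)).symm.symm)
      ((volume : Measure ℝ).prod (volume : Measure (Fin n → ℝ))) (volume.prod volume) :=
    (MeasurePreserving.id volume).prod
      (EuclideanSpace.volume_preserving_symm_measurableEquiv_toLp (Fin n)).symm
  have : MeasurePreserving (⇑((MeasurableEquiv.refl ℝ).prodCongr
      (MeasurableEquiv.toLp 2 (Fin n → ℝ)).symm.symm) ∘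
      ⇑(MeasurableEquiv.piFinSuccAbove (fun _ : Fin (n+1) => ℝ) 0) ∘
      ⇑(MeasurableEquiv.toLp 2 (Fin (n+1) → ℝ)).symm ∘ ⇑b.measurableEquiv)
      volume (volume.prod volume) := m4.comp (m3.comp (m2.comp m1))
  simpa [Smap, MeasurableEquiv.coe_trans, Function.comp_assoc] using this

lemma repr_Smap_symm (b : OrthonormalBasis (Fin (n+1)) ℝ (Euc (n+1)))
    (s : ℝ) (y : Euc n) (i : Fin (n+1)) :
    b.repr ((Smap b).symm (s, y)) i = Fin.cons (α := fun _ => ℝ) s (fun j => y j) i := by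
  have h1 : (Smap b).symm (s,y) = b.measurableEquiv.symm
      ((MeasurableEquiv.toLp 2 (Fin (n+1) → ℝ)).symm.symm
        ((MeasurableEquiv.piFinSuccAbove (fun _ : Fin (n+1) => ℝ) 0).symm
          (s, (MeasurableEquiv.toLp 2 (Fin n → ℝ)).symm y))) := rfl
  rw [h1]
  have h2 : b.repr (b.measurableEquiv.symm ((MeasurableEquiv.toLp 2 (Fin (n+1) → ℝ)).symm.symm
      ((MeasurableEquiv.piFinSuccAbove (fun _ : Fin (n+1) => ℝ) 0).symm
          (s, (MeasurableEquiv.toLp 2 (Fin n → ℝ)).symm y))) )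
      = (MeasurableEquiv.toLp 2 (Fin (n+1) → ℝ)).symm.symm
      ((MeasurableEquiv.piFinSuccAbove (fun _ : Fin (n+1) => ℝ) 0).symm
          (s, (MeasurableEquiv.toLp 2 (Fin n → ℝ)).symm y)) := by
    simp [OrthonormalBasis.measurableEquiv]
  rw [h2]
  simp [MeasurableEquiv.piFinSuccAbove, MeasurableEquiv.toLp]
  rfl

lemma inner_Smap_symm (b : OrthonormalBasis (Fin (n+1)) ℝ (Euc (n+1))) {θ : Euc (n+1)}
    (hb : b 0 = θ) (p : ℝ × Euc n) : ⟪θ, (Smap b).symm p⟫ = p.1 := by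
  have : ⟪θ, (Smap b).symm p⟫ = b.repr ((Smap b).symm p) 0 := by
    rw [b.repr_apply_apply, hb]
  rw [this]
  rw [show p = (p.1, p.2) from rfl, repr_Smap_symm b p.1 p.2 0, Fin.cons_zero]

lemma isometry_Smap_symm (b : OrthonormalBasis (Fin (n+1)) ℝ (Euc (n+1))) (s : ℝ) :
    Isometry (fun y : Euc n => (Smap b).symm (s, y)) := by
  refine Isometry.of_dist_eq fun y y' => ?_
  rw [← b.repr.dist_map]
  rw [EuclideanSpace.dist_eq, EuclideanSpace.dist_eq]
  congr 1
  rw [Fin.sum_univ_succ]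
  simp only [repr_Smap_symm, Fin.cons_zero, Fin.cons_succ]
  simp [dist_self]

lemma exists_const (K : Set (Euc (n+1))) (hKc : IsCompact K)
    (hV0 : volume K ≠ 0) (θ : Euc (n+1)) (hθ : ‖θ‖ = 1) :
    ∃ R : ℝ≥0∞, R ≠ ∞ ∧ ∀ t, t ≤ suppFn K θ →
      sectionTail K θ t = (R * volume (K ∩ {x | t ≤ ⟪θ, x⟫})).toReal := by
  have hcont : Continuous fun x : Euc (n+1) => ⟪θ, x⟫ := continuous_const.inner continuous_id
  -- an orthonormal basis with `b 0 = θ`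
  have horth : Orthonormal ℝ (({0} : Set (Fin (n+1))).restrict (fun _ => θ)) := by
    constructor
    · intro i; exact hθ
    · intro i j hij
      have hi : (i : Fin (n+1)) = 0 := i.2
      have hj : (j : Fin (n+1)) = 0 := j.2
      exact absurd (Subtype.ext (hi.trans hj.symm)) hij
  obtain ⟨b, hb⟩ := horth.exists_orthonormalBasis_extension_of_card_eq
    (by simp [finrank_euclideanSpace_fin])
  have hb0 : b 0 = θ := hb 0 rfl
  have hKmeas : MeasurableSet K := hKc.isClosed.measurableSet
  have hApre : MeasurableSet ((Smap b).symm ⁻¹' K) := (Smap b).symm.measurable hKmeas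
  set g : ℝ → ℝ≥0∞ := fun s => volume (Prod.mk s ⁻¹' ((Smap b).symm ⁻¹' K)) with hg
  -- Fubini
  have hA : ∀ C : Set (Euc (n+1)), MeasurableSet C →
      volume C = ∫⁻ s, volume {y : Euc n | (Smap b).symm (s, y) ∈ C} := by
    intro C hC
    have h1 : volume C = (volume.prod volume) ((Smap b).symm ⁻¹' C) := by
      rw [← (MeasurePreserving.symm (Smap b) (Smap_mp b)).map_eq, Measure.map_apply (Smap b).symm.measurable hC]
    rw [h1, Measure.prod_apply ((Smap b).symm.measurable hC)]
    rfl
  have gmeas : Measurable g := measurable_measure_prodMk_left hApre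
  have htot : ∫⁻ s, g s = volume K := (hA K hKmeas).symm
  have gfin : ∀ᵐ s : ℝ, g s < ∞ := ae_lt_top gmeas (by rw [htot]; exact hKc.measure_lt_top.ne)
  -- the Hausdorff measure on `Euc n` is a constant multiple of volume
  have hfr : ((Module.finrank ℝ (Euc n) : ℝ)) = (n : ℝ) := by rw [finrank_euclideanSpace_fin]
  haveI hinst : Measure.IsAddHaarMeasure (μH[(n : ℝ)] : Measure (Euc n)) := by
    have h := MeasureTheory.isAddHaarMeasure_hausdorffMeasure (E := Euc n)
    rwa [hfr] at h
  set c : NNReal := Measure.addHaarScalarFactor (μH[(n : ℝ)] : Measure (Euc n)) volume with hc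
  have hHaar : (μH[(n : ℝ)] : Measure (Euc n)) = c • volume :=
    Measure.isAddLeftInvariant_eq_smul _ _
  -- sections
  have hexp : (((n:ℕ)+1 : ℝ)) - 1 = (n : ℝ) := by push_cast; ring
  have hsec : ∀ s : ℝ, μH[((n+1 : ℕ) : ℝ) - 1] (K ∩ {x | ⟪θ, x⟫ = s})
      = (c : ℝ≥0∞) * g s := by
    intro s
    have himg : (fun y : Euc n => (Smap b).symm (s, y)) '' {y | (Smap b).symm (s, y) ∈ K}
        = K ∩ {x | ⟪θ, x⟫ = s} := by
      ext x
      constructor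
      · rintro ⟨y, hy, rfl⟩; exact ⟨hy, inner_Smap_symm b hb0 _⟩
      · rintro ⟨hxK, hxs⟩
        have h5 : ⟪θ, x⟫ = ((Smap b) x).1 := by
          have h := inner_Smap_symm b hb0 ((Smap b) x)
          rwa [MeasurableEquiv.symm_apply_apply] at h
        have h6 : (s, ((Smap b) x).2) = (Smap b) x :=
          Prod.ext (by rw [← h5, hxs]) rfl
        have hx1 : (Smap b).symm (s, ((Smap b) x).2) = x := by
          rw [h6, MeasurableEquiv.symm_apply_apply]
        exact ⟨((Smap b) x).2, by rw [mem_setOf_eq, hx1]; exact hxK, hx1⟩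
    have hiso := (isometry_Smap_symm b s).hausdorffMeasure_image
      (Or.inl (by positivity : (0:ℝ) ≤ (n:ℝ))) {y | (Smap b).symm (s, y) ∈ K}
    have : μH[((n+1 : ℕ) : ℝ) - 1] (K ∩ {x | ⟪θ, x⟫ = s})
        = μH[(n : ℝ)] {y : Euc n | (Smap b).symm (s, y) ∈ K} := by
      rw [show (((n+1 : ℕ) : ℝ) - 1) = (n:ℝ) by push_cast; ring, ← himg, hiso]
    rw [this, hHaar]
    rw [Measure.smul_apply, ENNReal.smul_def, smul_eq_mul]
    rfl
  -- psi formula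
  have hpsi : ∀ s : ℝ, psi K θ s = ((c : ℝ≥0∞) * g s / volume K).toReal := by
    intro s
    rw [psi, hsec s, ENNReal.toReal_div]
  -- cap formula
  have hcap : ∀ t, t ≤ suppFn K θ → ∫⁻ s in Ioc t (suppFn K θ), g s
      = volume (K ∩ {x | t ≤ ⟪θ, x⟫}) := by
    intro t ht
    have hCm : MeasurableSet (K ∩ {x | t ≤ ⟪θ, x⟫}) :=
      hKmeas.inter (isClosed_le continuous_const hcont).measurableSet
    rw [hA _ hCm]
    have hslice : ∀ s : ℝ, volume {y : Euc n | (Smap b).symm (s,y) ∈ K ∩ {x | t ≤ ⟪θ, x⟫}}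
        = (Ici t).indicator g s := by
      intro s
      by_cases hst : s ∈ Ici t
      · rw [indicator_of_mem hst]
        congr 1
        ext y
        simp only [mem_setOf_eq, mem_inter_iff, mem_preimage]
        constructor
        · rintro ⟨hy, -⟩; exact hy
        · intro hy
          refine ⟨hy, ?_⟩
          show t ≤ ⟪θ, (Smap b).symm (s, y)⟫
          rw [inner_Smap_symm b hb0]
          exact mem_Ici.mp hst
      · rw [indicator_of_notMem hst]
        have hemp : {y : Euc n | (Smap b).symm (s,y) ∈ K ∩ {x | t ≤ ⟪θ, x⟫}} = ∅ := by
          ext y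
          simp only [mem_setOf_eq, mem_inter_iff, mem_empty_iff_false, iff_false, not_and]
          intro _ h
          have : t ≤ s := by rwa [inner_Smap_symm b hb0] at h
          exact hst (mem_Ici.mpr this)
        rw [hemp, measure_empty]
    have hzero : ∫⁻ s in Ioi (suppFn K θ), g s = 0 := by
      have hz : ∀ s ∈ Ioi (suppFn K θ), g s = 0 := by
        intro s hs
        have : (Prod.mk s ⁻¹' ((Smap b).symm ⁻¹' K)) = (∅ : Set (Euc n)) := by
          ext y
          simp only [mem_preimage, mem_empty_iff_false, iff_false]
          intro hy
          have hle : ⟪θ, (Smap b).symm (s, y)⟫ ≤ suppFn K θ :=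
            le_csSup ((hKc.image hcont).bddAbove) (mem_image_of_mem _ hy)
          rw [inner_Smap_symm b hb0] at hle
          exact absurd hle (not_le.mpr hs)
        show volume (Prod.mk s ⁻¹' ((Smap b).symm ⁻¹' K)) = 0
        rw [this, measure_empty]
      rw [setLIntegral_congr_fun measurableSet_Ioi hz, lintegral_zero]
    calc ∫⁻ s in Ioc t (suppFn K θ), g s
        = (∫⁻ s in Ioc t (suppFn K θ), g s) + ∫⁻ s in Ioi (suppFn K θ), g s := by
          rw [hzero, add_zero]
      _ = ∫⁻ s in Ioi t, g s := by
          have hu := lintegral_union (μ := volume) (f := g) (A := Ioc t (suppFn K θ))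
            (B := Ioi (suppFn K θ)) measurableSet_Ioi (Ioc_disjoint_Ioi le_rfl)
          rw [Ioc_union_Ioi_eq_Ioi ht] at hu
          exact hu.symm
      _ = ∫⁻ s in Ici t, g s := by
          rw [Measure.restrict_congr_set Ioi_ae_eq_Ici]
      _ = ∫⁻ s, (Ici t).indicator g s := by
          rw [lintegral_indicator measurableSet_Ici]
      _ = ∫⁻ s, volume {y : Euc n | (Smap b).symm (s,y) ∈ K ∩ {x | t ≤ ⟪θ, x⟫}} := by
          simp_rw [hslice]
  refine ⟨(c : ℝ≥0∞) / volume K, (ENNReal.div_lt_top ENNReal.coe_ne_top hV0).ne, ?_⟩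
  intro t ht
  rw [sectionTail, integral_of_le ht]
  have h7 : ∫ s in Ioc t (suppFn K θ), psi K θ s
      = ∫ s in Ioc t (suppFn K θ), ((c : ℝ≥0∞) * g s / volume K).toReal := by
    exact setIntegral_congr_fun measurableSet_Ioc (fun s _ => hpsi s)
  rw [h7]
  rw [integral_toReal (((gmeas.const_mul _).div_const _).aemeasurable.restrict)
    (ae_restrict_of_ae (gfin.mono fun s hs =>
      ENNReal.div_lt_top (ENNReal.mul_ne_top ENNReal.coe_ne_top hs.ne) hV0))]
  have h8 : ∀ s : ℝ, (c : ℝ≥0∞) * g s / volume K = ((c : ℝ≥0∞) / volume K) * g s := by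
    intro s
    rw [ENNReal.div_eq_inv_mul, ENNReal.div_eq_inv_mul]
    ring
  simp_rw [h8]
  rw [lintegral_const_mul _ gmeas, hcap t ht]

lemma cap_homothety (K : Set (Euc (n+1))) (hKc : IsCompact K) (hconv : Convex ℝ K)
    (hne : K.Nonempty) (θ : Euc (n+1)) {m t : ℝ} (hmt : m ≤ t) (hth : t ≤ suppFn K θ)
    (hlt : m < suppFn K θ) :
    ENNReal.ofReal (((suppFn K θ - t) / (suppFn K θ - m)) ^ (n+1))
      * volume (K ∩ {x | m ≤ ⟪θ, x⟫}) ≤ volume (K ∩ {x | t ≤ ⟪θ, x⟫}) := by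
  have hcont : Continuous fun x : Euc (n+1) => ⟪θ, x⟫ := continuous_const.inner continuous_id
  obtain ⟨x₀, hx₀K, hmax⟩ := hKc.exists_isMaxOn hne hcont.continuousOn
  have hsup : ⟪θ, x₀⟫ = suppFn K θ := by
    refine (IsGreatest.csSup_eq ⟨mem_image_of_mem _ hx₀K, ?_⟩).symm
    rintro _ ⟨x, hx, rfl⟩
    exact hmax hx
  set h := suppFn K θ with hh
  set lam := (h - t) / (h - m) with hlam
  have hl0 : 0 ≤ lam := div_nonneg (by linarith) (by linarith)
  have hl1 : lam ≤ 1 := by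
    rw [hlam, div_le_one (by linarith)]; linarith
  have hmul : lam * (h - m) = h - t := div_mul_cancel₀ _ (sub_ne_zero.mpr hlt.ne')
  have hsub : AffineMap.homothety x₀ lam '' (K ∩ {x | m ≤ ⟪θ, x⟫}) ⊆ K ∩ {x | t ≤ ⟪θ, x⟫} := by
    rintro _ ⟨x, ⟨hxK, hxm⟩, rfl⟩
    have hxm' : m ≤ ⟪θ, x⟫ := hxm
    have heq : AffineMap.homothety x₀ lam x = lam • x + (1 - lam) • x₀ := by
      rw [AffineMap.homothety_apply]
      rw [vsub_eq_sub, vadd_eq_add]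
      rw [smul_sub, sub_smul, one_smul]
      abel
    constructor
    · rw [heq]
      exact hconv hxK hx₀K hl0 (by linarith) (by ring)
    · show t ≤ ⟪θ, AffineMap.homothety x₀ lam x⟫
      rw [heq, inner_add_right, real_inner_smul_right, real_inner_smul_right, hsup]
      have h2 := mul_le_mul_of_nonneg_left hxm' hl0
      nlinarith [hmul]
  calc ENNReal.ofReal (lam ^ (n+1)) * volume (K ∩ {x | m ≤ ⟪θ, x⟫})
      = volume (AffineMap.homothety x₀ lam '' (K ∩ {x | m ≤ ⟪θ, x⟫})) := by
        rw [Measure.addHaar_image_homothety, finrank_euclideanSpace_fin,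
          abs_of_nonneg (pow_nonneg hl0 _)]
    _ ≤ volume (K ∩ {x | t ≤ ⟪θ, x⟫}) := measure_mono hsub

end SectionTailAux

/-- For a convex body `K ⊆ ℝᵈ`, a unit vector `θ`, and `t ∈ [m_{K,θ}, h_K(θ)]` (where `m` is
the median, `A_{K,θ}(m) = 1/2`):
`A_{K,θ}(t) ≥ (1/2) ((h_K(θ)-t)/(h_K(θ)-m))^d`. -/
theorem sectionTail_tail_bound
    (d : ℕ) (hd : 1 ≤ d) (K : Set (Euc d)) (hK : IsConvexBody K)
    (θ : Euc d) (hθ : ‖θ‖ = 1)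
    (m : ℝ) (hm : sectionTail K θ m = 1 / 2)
    (t : ℝ) (ht : t ∈ Set.Icc m (suppFn K θ)) :
    (1 / 2) * ((suppFn K θ - t) / (suppFn K θ - m)) ^ (d : ℝ) ≤ sectionTail K θ t := by
  obtain ⟨n, rfl⟩ : ∃ n, d = n + 1 := ⟨d - 1, (Nat.succ_pred_eq_of_pos hd).symm⟩
  obtain ⟨hKc, hconv, hint⟩ := hK
  have hV0 : volume K ≠ 0 := (Measure.measure_pos_of_nonempty_interior (μ := volume) hint).ne'
  obtain ⟨R, hRtop, hEq⟩ := SectionTailAux.exists_const K hKc hV0 θ hθ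
  have hmt : m ≤ t := ht.1
  have hth : t ≤ suppFn K θ := ht.2
  have hmh : m ≤ suppFn K θ := hmt.trans hth
  rcases eq_or_lt_of_le hmh with heq | hlt
  · have htm : t = m := le_antisymm (heq ▸ hth) hmt
    rw [show (suppFn K θ - t) / (suppFn K θ - m) = 0 by rw [← heq, htm, sub_self, div_zero],
      Real.zero_rpow (Nat.cast_ne_zero.mpr (Nat.succ_ne_zero n)), htm, hm]
    norm_num
  · have hEm := hEq m hmh
    have hEt := hEq t hth
    rw [hm] at hEm
    rw [hEt]
    set lam := (suppFn K θ - t) / (suppFn K θ - m) with hlam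
    have hl0 : 0 ≤ lam := div_nonneg (by linarith) (by linarith)
    have hcap := SectionTailAux.cap_homothety K hKc hconv (hint.mono interior_subset) θ
      hmt hth hlt
    have hfin : R * volume (K ∩ {x | t ≤ ⟪θ, x⟫}) ≠ ∞ :=
      ENNReal.mul_ne_top hRtop
        ((measure_mono inter_subset_left).trans_lt hKc.measure_lt_top).ne
    have hmono : (R * (ENNReal.ofReal (lam ^ (n+1)) * volume (K ∩ {x | m ≤ ⟪θ, x⟫}))).toReal
        ≤ (R * volume (K ∩ {x | t ≤ ⟪θ, x⟫})).toReal :=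
      ENNReal.toReal_mono hfin (mul_le_mul_right hcap R)
    have hcalc : (R * (ENNReal.ofReal (lam ^ (n+1)) * volume (K ∩ {x | m ≤ ⟪θ, x⟫}))).toReal
        = lam ^ (n+1) * (1/2) := by
      rw [mul_left_comm, ENNReal.toReal_mul, ENNReal.toReal_ofReal (pow_nonneg hl0 _), ← hEm]
    have hrpow : lam ^ (((n+1 : ℕ)) : ℝ) = lam ^ (n+1 : ℕ) := Real.rpow_natCast lam (n+1)
    rw [hrpow]
    calc (1/2) * lam^(n+1) = lam^(n+1) * (1/2) := by ring
      _ = (R * (ENNReal.ofReal (lam ^ (n+1)) * volume (K ∩ {x | m ≤ ⟪θ, x⟫}))).toReal :=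
          hcalc.symm
      _ ≤ _ := hmono
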